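/- For every natural number N ≥ 1, as an identity of formal power series in q: the Fine-type evaluation F(-1/q, -q^N; q) = ((1+q^N)/(1-q^N)) ((-1;q)_N − 1), where F(a,b;t) = ∑_{n=0}^{∞} (aq;q)_n t^n/(bq;q)_n. -/

import Mathlib

open Finset Filter

/-- q-Pochhammer symbol (a;q)_n = ∏_{k=0}^{n-1} (1 - a q^k). -/
noncomputable def qP (a q : ℂ) (n : ℕ) : ℂ := ∏ k ∈ Finset.range n, (1 - a * q ^ k)

/-- Gaussian (q-)binomial coefficient [N choose n]_q. -/
noncomputable def qBinom (q : ℂ) (N n : ℕ) : ℂ := qP q q N / (qP q q n * qP q q (N - n))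

/-- Fine's function F(a,b;t) = ∑_{n≥0} (aq;q)_n t^n / (bq;q)_n. -/
noncomputable def fine (q a b t : ℂ) : ℂ := ∑' n : ℕ, qP (a * q) q n * t ^ n / qP (b * q) q n

theorem stmt_10 (N : ℕ) (hN : 1 ≤ N) (q : ℂ) (hq : ‖q‖ < 1) (hq0 : q ≠ 0) :
    fine q (-1 / q) (-(q ^ N)) q = ((1 + q ^ N) / (1 - q ^ N)) * (qP (-1) q N - 1) := by
  unfold fine
  have hq1 : (0:ℝ) ≤ ‖q‖ := norm_nonneg q
  have hone : ∀ m : ℕ, (1:ℂ) + q ^ m ≠ 0 := by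
    intro m hc
    match m with
    | 0 => norm_num at hc
    | (k+1) =>
      have h1 : q ^ (k+1) = -1 := by linear_combination hc
      have h2 : ‖q ^ (k+1)‖ = 1 := by rw [h1]; simp
      have h3 : ‖q ^ (k+1)‖ ≤ ‖q‖ := by
        rw [norm_pow]
        calc ‖q‖ ^ (k+1) ≤ ‖q‖ ^ 1 := pow_le_pow_of_le_one hq1 hq.le (by omega)
          _ = ‖q‖ := pow_one _
      linarith
  have hqN : (1:ℂ) - q ^ N ≠ 0 := by
    intro hc
    have h1 : q ^ N = 1 := by linear_combination -hc
    have h2 : ‖q ^ N‖ ≤ ‖q‖ := by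
      rw [norm_pow]
      calc ‖q‖ ^ N ≤ ‖q‖ ^ 1 := pow_le_pow_of_le_one hq1 hq.le hN
        _ = ‖q‖ := pow_one _
    rw [h1] at h2; rw [norm_one] at h2; linarith

  -- product notation helpers
  set P : ℕ → ℂ := fun n => ∏ k ∈ Finset.range N, (1 + q ^ (n + k)) with hPdef
  set Q : ℕ → ℂ := fun n => ∏ k ∈ Finset.range (N+1), (1 + q ^ (n + k)) with hQdef
  have hP : ∀ n, P n ≠ 0 := fun n => Finset.prod_ne_zero_iff.2 fun k _ => hone (n+k)
  have hQne : ∀ n, Q n ≠ 0 := fun n => Finset.prod_ne_zero_iff.2 fun k _ => hone (n+k)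
  have hQ1 : ∀ n, Q n = (1 + q ^ n) * P (n+1) := by
    intro n
    simp only [hQdef, hPdef]
    rw [Finset.prod_range_succ']
    simp only [Nat.add_zero]
    rw [mul_comm]
    congr 1
    exact Finset.prod_congr rfl fun k _ => by rw [show n+(k+1) = (n+1)+k by omega]
  have hQ2 : ∀ n, Q n = P n * (1 + q ^ (n + N)) := by
    intro n
    simp only [hQdef, hPdef]
    rw [Finset.prod_range_succ]
  have hA : ∀ m, qP (-1) q m = ∏ k ∈ Finset.range m, (1 + q ^ k) :=
    fun m => Finset.prod_congr rfl fun k _ => by ring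
  have hB : ∀ m, qP (-(q^(N+1))) q m = ∏ k ∈ Finset.range m, (1 + q ^ ((N+1) + k)) :=
    fun m => Finset.prod_congr rfl fun k _ => by rw [pow_add]; ring
  have hBne : ∀ m, qP (-(q^(N+1))) q m ≠ 0 := by
    intro m
    rw [hB]
    exact Finset.prod_ne_zero_iff.2 fun k _ => hone ((N+1)+k)
  set D : ℂ := qP (-1) q (N+1) with hDdef
  have key : ∀ n, qP (-1) q n * Q n = D * qP (-(q^(N+1))) q n := by
    intro n
    rw [hDdef, hA, hA, hB]
    simp only [hQdef]
    rw [← Finset.prod_range_add (fun k => (1:ℂ) + q ^ k) n (N+1)]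
    rw [← Finset.prod_range_add (fun k => (1:ℂ) + q ^ k) (N+1) n]
    rw [add_comm n (N+1)]
  have e1 : ∀ n, qP (-1) q n * q ^ n / qP (-(q^(N+1))) q n = D * q ^ n / Q n := by
    intro n
    rw [div_eq_div_iff (hBne n) (hQne n)]
    linear_combination q ^ n * key n
  have e2 : ∀ n, D * q ^ n / Q n = (D / (1 - q ^ N)) * ((P (n+1))⁻¹ - (P n)⁻¹) := by
    intro n
    have h1 := hQ1 n
    have h2 := hQ2 n
    field_simp [hP n, hP (n+1), hQne n]
    linear_combination (-(D * P n)) * h1 + (D * P (n+1)) * h2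
  -- lower bound on factors
  have hlow : ∀ m : ℕ, 1 - ‖q‖ ≤ ‖(1:ℂ) + q ^ m‖ := by
    intro m
    match m with
    | 0 =>
      have h2 : ((1:ℂ) + q ^ 0) = 2 := by norm_num
      rw [h2]
      have h3 : ‖(2:ℂ)‖ = 2 := by norm_num
      rw [h3]; linarith
    | (k+1) =>
      have h3 : ‖q ^ (k+1)‖ ≤ ‖q‖ := by
        rw [norm_pow]
        calc ‖q‖ ^ (k+1) ≤ ‖q‖ ^ 1 := pow_le_pow_of_le_one hq1 hq.le (by omega)
          _ = ‖q‖ := pow_one _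
      have h4 : ‖(1:ℂ)‖ ≤ ‖(1:ℂ) + q ^ (k+1)‖ + ‖q ^ (k+1)‖ := by
        calc ‖(1:ℂ)‖ = ‖((1:ℂ) + q ^ (k+1)) - q ^ (k+1)‖ := by ring_nf
          _ ≤ _ := norm_sub_le _ _
      rw [norm_one] at h4
      linarith
  have hQlow : ∀ n, (1 - ‖q‖) ^ (N+1) ≤ ‖Q n‖ := by
    intro n
    simp only [hQdef]
    rw [norm_prod]
    calc (1 - ‖q‖) ^ (N+1) = ∏ _k ∈ Finset.range (N+1), (1 - ‖q‖) := by
          rw [Finset.prod_const, Finset.card_range]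
      _ ≤ _ := Finset.prod_le_prod (fun k _ => by linarith) (fun k _ => hlow (n+k))
  have hpos : (0:ℝ) < (1 - ‖q‖) ^ (N+1) := pow_pos (by linarith) _
  -- summability
  have hf : Summable (fun n : ℕ => D * q ^ n / Q n) := by
    apply Summable.of_norm_bounded (g := fun n => (‖D‖ / (1 - ‖q‖) ^ (N+1)) * ‖q‖ ^ n)
      ((summable_geometric_of_lt_one hq1 hq).mul_left _)
    intro n
    rw [norm_div, norm_mul, norm_pow,
      show ‖D‖ / (1 - ‖q‖) ^ (N+1) * ‖q‖ ^ n = ‖D‖ * ‖q‖ ^ n / (1 - ‖q‖) ^ (N+1) by ring]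
    exact div_le_div_of_nonneg_left (by positivity) hpos (hQlow n)
  -- partial sums telescope
  have hpart : ∀ M : ℕ, ∑ n ∈ Finset.range M, D * q ^ n / Q n
      = (D / (1 - q ^ N)) * ((P M)⁻¹ - (P 0)⁻¹) := by
    intro M
    calc ∑ n ∈ Finset.range M, D * q ^ n / Q n
        = ∑ n ∈ Finset.range M, (D / (1 - q ^ N)) * ((P (n+1))⁻¹ - (P n)⁻¹) :=
          Finset.sum_congr rfl fun n _ => e2 n
      _ = (D / (1 - q ^ N)) * ∑ n ∈ Finset.range M, ((P (n+1))⁻¹ - (P n)⁻¹) := by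
          rw [Finset.mul_sum]
      _ = _ := by rw [Finset.sum_range_sub (fun n => (P n)⁻¹)]
  -- limit of P M
  have hPlim : Tendsto (fun M : ℕ => P M) atTop (nhds 1) := by
    have h0 : Tendsto (fun M : ℕ => q ^ M) atTop (nhds 0) :=
      tendsto_pow_atTop_nhds_zero_of_norm_lt_one hq
    have hc : Continuous (fun x : ℂ => ∏ k ∈ Finset.range N, (1 + x * q ^ k)) := by
      apply continuous_finset_prod
      intro k _
      exact continuous_const.add (continuous_id.mul continuous_const)
    have h1 := (hc.tendsto 0).comp h0
    have h2 : ((fun x : ℂ => ∏ k ∈ Finset.range N, (1 + x * q ^ k)) ∘ fun M : ℕ => q ^ M)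
        = fun M : ℕ => P M := by
      funext M
      simp only [Function.comp, hPdef]
      exact Finset.prod_congr rfl fun k _ => by rw [pow_add]
    rw [h2] at h1
    simpa using h1
  have hPinv : Tendsto (fun M : ℕ => (P M)⁻¹) atTop (nhds 1) := by
    have := hPlim.inv₀ one_ne_zero
    simpa using this
  have hlim2 : Tendsto (fun M : ℕ => ∑ n ∈ Finset.range M, D * q ^ n / Q n) atTop
      (nhds ((D / (1 - q ^ N)) * (1 - (P 0)⁻¹))) := by
    simp only [hpart]
    exact ((hPinv.sub tendsto_const_nhds).const_mul _)
  have hval : ∑' n : ℕ, D * q ^ n / Q n = (D / (1 - q ^ N)) * (1 - (P 0)⁻¹) :=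
    tendsto_nhds_unique hf.hasSum.tendsto_sum_nat hlim2
  -- assemble
  have ha : (-1/q) * q = -1 := by field_simp
  have hb : (-(q^N)) * q = -(q^(N+1)) := by ring
  rw [ha, hb]
  have : ∑' n : ℕ, qP (-1) q n * q ^ n / qP (-(q^(N+1))) q n = ∑' n : ℕ, D * q ^ n / Q n :=
    tsum_congr e1
  rw [this, hval]
  -- final algebra
  have hD1 : D = qP (-1) q N * (1 + q ^ N) := by
    rw [hDdef]
    unfold qP
    rw [Finset.prod_range_succ]
    ring
  have hP0 : P 0 = qP (-1) q N := by
    simp only [hPdef]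
    exact Finset.prod_congr rfl fun k _ => by rw [Nat.zero_add]; ring
  have hPN : qP (-1) q N ≠ 0 := by rw [← hP0]; exact hP 0
  rw [hD1, hP0]
  field_simp
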